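/- Let g be a compact simple Lie algebra, t a maximal abelian subalgebra, Π = {α_1,…,α_n} the fundamental roots, δ = Σ_j m_j α_j the highest root, and K_i ∈ t_C defined by α_j(K_i) = δ_{ji}. If m_i = 1 and σ := Ad(exp(π/2)√−1K_i), then the fixed-point algebra g^σ equals g^{τ_{K_i}} where τ_{K_i} = Ad(exp π√−1K_i); consequently, since τ_{K_i} is an involution, (g, g^σ) is a symmetric pair. -/

import Mathlib

/-!
Common framework: we model the complexification `gC` of a compact Lie algebra `g` as a
complex Lie algebra, the compact real form `g` and the maximal abelian subalgebra `t`
as real Lie subalgebras of `gC`, roots of `(gC, tC)` as complex-linear functionals on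
`gC` (only their restriction to `tC`, the complex span of `t`, matters), and the
inner automorphisms `Ad(exp X) = exp (ad X)` through an abstract family `expAd`
characterized by its action on eigenvectors of `ad X` (which determines it on the
compact form, where every `ad X` is semisimple).
-/

open Complex

namespace Paper

variable (gC : Type) [LieRing gC] [LieAlgebra ℂ gC] [LieAlgebra ℝ gC]
  [IsScalarTower ℝ ℂ gC] [FiniteDimensional ℂ gC]

/-- Composition group structure on the Lie algebra automorphisms of `gC`. -/
noncomputable instance : Group (gC ≃ₗ⁅ℂ⁆ gC) where
  mul f g := g.trans f
  one := LieEquiv.refl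
  inv f := f.symm
  mul_assoc f g h := rfl
  one_mul f := rfl
  mul_one f := rfl
  inv_mul_cancel f := by
    ext x
    exact f.symm_apply_apply x

/-- The complex span `t_ℂ` of a real subalgebra `t` of `gC`. -/
def cspan (t : LieSubalgebra ℝ gC) : Submodule ℂ gC := Submodule.span ℂ (t : Set gC)

/-- The root space of the functional `a` with respect to `t_ℂ`. -/
def rootSpace (t : LieSubalgebra ℝ gC) (a : Module.Dual ℂ gC) : Set gC :=
  {X : gC | ∀ H ∈ cspan gC t, ⁅H, X⁆ = a H • X}

/-- `a` is a root of `(gC, t_ℂ)`. -/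
def IsRoot (t : LieSubalgebra ℝ gC) (a : Module.Dual ℂ gC) : Prop :=
  (∃ H ∈ cspan gC t, a H ≠ 0) ∧ ∃ X : gC, X ≠ 0 ∧ X ∈ rootSpace gC t a

/-- `g` is a compact real form of `gC`: `gC = g ⊕ √-1 g` and the Killing form of `g`
is negative definite. -/
structure IsCompactForm (g : LieSubalgebra ℝ gC) : Prop where
  spans : ∀ z : gC, ∃ x ∈ g, ∃ y ∈ g, z = x + Complex.I • y
  inj : ∀ x : gC, x ∈ g → Complex.I • x ∈ g → x = 0
  negdef : ∀ x : ↥g, x ≠ 0 → killingForm ℝ ↥g x x < 0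

/-- `t` is a maximal abelian subalgebra of `g`. -/
structure IsMaxAbelian (g t : LieSubalgebra ℝ gC) : Prop where
  le : t ≤ g
  abelian : ∀ x ∈ t, ∀ y ∈ t, ⁅x, y⁆ = (0 : gC)
  max : ∀ t' : LieSubalgebra ℝ gC, t' ≤ g →
    (∀ x ∈ t', ∀ y ∈ t', ⁅x, y⁆ = (0 : gC)) → t ≤ t' → t' = t

/-- `α 1, …, α n` is a system of fundamental (simple) roots of `Δ(gC, t_ℂ)` and
`K 1, …, K n` is the dual basis of `t_ℂ`, i.e. `α i (K j) = δ_{ij}`. -/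
structure IsSimpleSystem (t : LieSubalgebra ℝ gC) (n : ℕ) (α : ℕ → Module.Dual ℂ gC)
    (K : ℕ → gC) : Prop where
  isRoot : ∀ i ∈ Finset.Icc 1 n, IsRoot gC t (α i)
  decomp : ∀ b : Module.Dual ℂ gC, IsRoot gC t b →
    (∃ k : ℕ → ℕ, ∀ H ∈ cspan gC t, b H = ∑ j ∈ Finset.Icc 1 n, (k j : ℂ) * α j H) ∨
    (∃ k : ℕ → ℕ, ∀ H ∈ cspan gC t, b H = -∑ j ∈ Finset.Icc 1 n, (k j : ℂ) * α j H)
  K_mem : ∀ j ∈ Finset.Icc 1 n, K j ∈ cspan gC t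
  K_dual : ∀ i ∈ Finset.Icc 1 n, ∀ j ∈ Finset.Icc 1 n, α i (K j) = if i = j then 1 else 0

/-- `δ = Σ m_j α_j` is the highest root of `Δ(gC, t_ℂ)`. -/
structure IsHighestRoot (t : LieSubalgebra ℝ gC) (n : ℕ) (α : ℕ → Module.Dual ℂ gC)
    (δ : Module.Dual ℂ gC) (m : ℕ → ℕ) : Prop where
  isRoot : IsRoot gC t δ
  decomp : ∀ H ∈ cspan gC t, δ H = ∑ j ∈ Finset.Icc 1 n, (m j : ℂ) * α j H
  highest : ∀ (b : Module.Dual ℂ gC) (k : ℕ → ℕ), IsRoot gC t b →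
    (∀ H ∈ cspan gC t, b H = ∑ j ∈ Finset.Icc 1 n, (k j : ℂ) * α j H) →
    ∀ j ∈ Finset.Icc 1 n, k j ≤ m j

/-- `expAd X` is the inner automorphism `Ad(exp X) = exp (ad X)` of `gC`:
it multiplies each eigenvector of `ad X` with eigenvalue `c` by `e^c`, it is additive on
commuting arguments, and conjugation by any automorphism transports it naturally. -/
structure IsExpAd (expAd : gC → (gC ≃ₗ⁅ℂ⁆ gC)) : Prop where
  eig : ∀ (X Y : gC) (c : ℂ), ⁅X, Y⁆ = c • Y → expAd X Y = Complex.exp c • Y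
  add : ∀ X Y : gC, ⁅X, Y⁆ = 0 → expAd (X + Y) = expAd X * expAd Y
  conj : ∀ (f : gC ≃ₗ⁅ℂ⁆ gC) (X : gC), f * expAd X * f⁻¹ = expAd (f X)

/-- The group `Int(s)` of inner automorphisms generated by `exp (ad X)`, `X ∈ s`. -/
noncomputable def Inn (expAd : gC → (gC ≃ₗ⁅ℂ⁆ gC)) (s : LieSubalgebra ℝ gC) :
    Subgroup (gC ≃ₗ⁅ℂ⁆ gC) :=
  Subgroup.closure (expAd '' (s : Set gC))

/-- The automorphism `τ_H = Ad(exp π √-1 H)`. -/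
noncomputable def tau (expAd : gC → (gC ≃ₗ⁅ℂ⁆ gC)) (H : gC) : gC ≃ₗ⁅ℂ⁆ gC :=
  expAd (((Real.pi : ℂ) * Complex.I) • H)

/-- The automorphism `Ad(exp (π/2) √-1 H)`. -/
noncomputable def sigmaAd (expAd : gC → (gC ≃ₗ⁅ℂ⁆ gC)) (H : gC) : gC ≃ₗ⁅ℂ⁆ gC :=
  expAd ((((Real.pi / 2 : ℝ) : ℂ) * Complex.I) • H)

/-- The fixed point set `g^f` of an automorphism `f` inside the real form `g`. -/
def FixIn (g : LieSubalgebra ℝ gC) (f : gC ≃ₗ⁅ℂ⁆ gC) : Set gC :=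
  {x : gC | x ∈ g ∧ f x = x}

/-- Root space decomposition: `gC` is spanned by `t_ℂ` together with the root spaces. -/
def SpansByRoots (t : LieSubalgebra ℝ gC) : Prop :=
  Submodule.span ℂ ((cspan gC t : Set gC) ∪
    {X : gC | ∃ a : Module.Dual ℂ gC, IsRoot gC t a ∧ X ∈ rootSpace gC t a}) = ⊤


/-! ### Auxiliary lemmas -/

section Aux

lemma csmul_cancel {L : Type} [AddCommGroup L] [Module ℂ L]
    {c : ℂ} (hc : c ≠ 0) {x : L} (h : c • x = 0) : x = 0 := by
  have := congrArg (fun z => c⁻¹ • z) h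
  simpa [smul_smul, inv_mul_cancel₀ hc] using this

lemma conj_of_re_zero {z : ℂ} (h : z.re = 0) : (starRingEnd ℂ) z = -z := by
  apply Complex.ext <;> simp [h]

variable {L : Type} [LieRing L] [LieAlgebra ℂ L] [LieAlgebra ℝ L]
  [IsScalarTower ℝ ℂ L]

lemma rsmul (r : ℝ) (x : L) : ((r : ℝ) : ℂ) • x = r • x := by
  rw [← algebraMap_smul ℂ r x]; rfl

/-- Expansion of a complex scalar action in terms of real and imaginary parts. -/
lemma csmul_decomp (c : ℂ) (x y : L) :
    c • (x + Complex.I • y) = (c.re • x - c.im • y) + Complex.I • (c.im • x + c.re • y) := by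
  rw [← rsmul c.re x, ← rsmul c.im y, ← rsmul c.im x, ← rsmul c.re y]
  match_scalars <;> simp [Complex.ext_iff]

lemma lie_expand (x y x' y' : L) :
    ⁅x + Complex.I • y, x' + Complex.I • y'⁆
      = (⁅x, x'⁆ - ⁅y, y'⁆) + Complex.I • (⁅x, y'⁆ + ⁅y, x'⁆) := by
  simp only [lie_add, add_lie, lie_smul, smul_lie, smul_smul, Complex.I_mul_I, smul_add,
    neg_one_smul, neg_smul, one_smul]
  module

variable {g t : LieSubalgebra ℝ L}

lemma decomp_unique (hg : IsCompactForm L g) {x y x' y' : L}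
    (hx : x ∈ g) (hy : y ∈ g) (hx' : x' ∈ g) (hy' : y' ∈ g)
    (h : x + Complex.I • y = x' + Complex.I • y') : x = x' ∧ y = y' := by
  have h2 : Complex.I • (y' - y) - (x - x') = 0 := by
    rw [smul_sub]
    have h' : x + Complex.I • y - (x' + Complex.I • y') = 0 := sub_eq_zero.mpr h
    calc Complex.I • y' - Complex.I • y - (x - x')
        = -(x + Complex.I • y - (x' + Complex.I • y')) := by abel
      _ = 0 := by rw [h', neg_zero]
  have h2' := sub_eq_zero.mp h2
  have h3 : Complex.I • (y' - y) ∈ g := by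
    rw [h2']; exact sub_mem hx hx'
  have h4 : y' - y = 0 := hg.inj _ (sub_mem hy' hy) h3
  have hy2 : y = y' := (eq_of_sub_eq_zero h4).symm
  refine ⟨?_, hy2⟩
  have := h
  rw [hy2] at this
  exact add_right_cancel this

/-- The conjugation of `gC` with respect to the compact real form `g`. -/
noncomputable def conjFun (hg : IsCompactForm L g) : L → L :=
  fun z => (hg.spans z).choose - Complex.I • (hg.spans z).choose_spec.2.choose

lemma conjFun_spec (hg : IsCompactForm L g) {x y : L} (hx : x ∈ g) (hy : y ∈ g) :
    conjFun hg (x + Complex.I • y) = x - Complex.I • y := by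
  set z := x + Complex.I • y with hz
  have h1 := (hg.spans z).choose_spec.1
  have h2 := (hg.spans z).choose_spec.2.choose_spec.1
  have h3 := (hg.spans z).choose_spec.2.choose_spec.2
  obtain ⟨ex, ey⟩ := decomp_unique hg h1 h2 hx hy (h3.symm.trans hz)
  show (hg.spans z).choose - Complex.I • (hg.spans z).choose_spec.2.choose = x - Complex.I • y
  rw [ey, ex]

lemma conj_mem (hg : IsCompactForm L g) {z : L} (hz : z ∈ g) : conjFun hg z = z := by
  have := conjFun_spec hg hz g.zero_mem
  simpa using this

lemma conj_add (hg : IsCompactForm L g) (z w : L) :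
    conjFun hg (z + w) = conjFun hg z + conjFun hg w := by
  obtain ⟨x, hx, y, hy, rfl⟩ := hg.spans z
  obtain ⟨x', hx', y', hy', rfl⟩ := hg.spans w
  rw [conjFun_spec hg hx hy, conjFun_spec hg hx' hy']
  have e : (x + Complex.I • y) + (x' + Complex.I • y') = (x + x') + Complex.I • (y + y') := by
    rw [smul_add]; abel
  rw [e, conjFun_spec hg (add_mem hx hx') (add_mem hy hy'), smul_add]
  abel

lemma conj_smul (hg : IsCompactForm L g) (c : ℂ) (z : L) :
    conjFun hg (c • z) = (starRingEnd ℂ) c • conjFun hg z := by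
  obtain ⟨x, hx, y, hy, rfl⟩ := hg.spans z
  rw [csmul_decomp, conjFun_spec hg (sub_mem (g.smul_mem _ hx) (g.smul_mem _ hy))
    (add_mem (g.smul_mem _ hx) (g.smul_mem _ hy)), conjFun_spec hg hx hy]
  have e : x - Complex.I • y = x + Complex.I • (-y) := by rw [smul_neg]; abel
  rw [e, csmul_decomp]
  simp only [Complex.conj_re, Complex.conj_im, smul_neg, neg_smul]
  rw [← rsmul c.re x, ← rsmul c.im y, ← rsmul c.im x, ← rsmul c.re y]
  match_scalars <;> simp [Complex.ext_iff]

lemma conj_conj (hg : IsCompactForm L g) (z : L) : conjFun hg (conjFun hg z) = z := by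
  obtain ⟨x, hx, y, hy, rfl⟩ := hg.spans z
  rw [conjFun_spec hg hx hy]
  have e : x - Complex.I • y = x + Complex.I • (-y) := by rw [smul_neg]; abel
  rw [e, conjFun_spec hg hx (neg_mem hy), smul_neg]
  abel

lemma conj_zero (hg : IsCompactForm L g) : conjFun hg 0 = 0 :=
  conj_mem hg g.zero_mem

lemma conj_ne_zero (hg : IsCompactForm L g) {z : L} (hz : z ≠ 0) : conjFun hg z ≠ 0 := by
  intro h
  apply hz
  have := congrArg (conjFun hg) h
  rwa [conj_conj, conj_zero] at this

lemma conj_fixed (hg : IsCompactForm L g) {z : L} (h : conjFun hg z = z) : z ∈ g := by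
  obtain ⟨x, hx, y, hy, rfl⟩ := hg.spans z
  rw [conjFun_spec hg hx hy] at h
  have h3 : -(Complex.I • y) = Complex.I • y := by
    rw [sub_eq_add_neg] at h
    exact add_left_cancel h
  have h2 : (2 * Complex.I) • y = 0 := by
    rw [two_mul, add_smul]
    nth_rewrite 1 [← h3]
    simp
  have hy0 : y = 0 := csmul_cancel (by simp [Complex.I_ne_zero]) h2
  simpa [hy0] using hx

lemma conj_lie (hg : IsCompactForm L g) (z w : L) :
    conjFun hg ⁅z, w⁆ = ⁅conjFun hg z, conjFun hg w⁆ := by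
  obtain ⟨x, hx, y, hy, rfl⟩ := hg.spans z
  obtain ⟨x', hx', y', hy', rfl⟩ := hg.spans w
  rw [lie_expand, conjFun_spec hg hx hy, conjFun_spec hg hx' hy',
    conjFun_spec hg (sub_mem (g.lie_mem hx hx') (g.lie_mem hy hy'))
      (add_mem (g.lie_mem hx hy') (g.lie_mem hy hx'))]
  have e : ∀ u v : L, u - Complex.I • v = u + Complex.I • (-v) := by
    intro u v; rw [smul_neg]; abel
  rw [e x y, e x' y', lie_expand]
  simp only [lie_neg, neg_lie, neg_neg, smul_neg, neg_smul, smul_add]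
  abel

lemma cspan_decomp {z : L} (hz : z ∈ cspan L t) :
    ∃ x ∈ t, ∃ y ∈ t, z = x + Complex.I • y := by
  induction hz using Submodule.span_induction with
  | mem w hw => exact ⟨w, hw, 0, t.zero_mem, by simp⟩
  | zero => exact ⟨0, t.zero_mem, 0, t.zero_mem, by simp⟩
  | add a b _ _ iha ihb =>
    obtain ⟨x, hx, y, hy, rfl⟩ := iha
    obtain ⟨x', hx', y', hy', rfl⟩ := ihb
    exact ⟨x + x', add_mem hx hx', y + y', add_mem hy hy', by rw [smul_add]; abel⟩
  | smul c a _ ih =>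
    obtain ⟨x, hx, y, hy, rfl⟩ := ih
    exact ⟨c.re • x - c.im • y, sub_mem (t.smul_mem _ hx) (t.smul_mem _ hy),
      c.im • x + c.re • y, add_mem (t.smul_mem _ hx) (t.smul_mem _ hy), csmul_decomp c x y⟩

lemma mem_cspan (x y : L) (hx : x ∈ t) (hy : y ∈ t) : x + Complex.I • y ∈ cspan L t :=
  add_mem (Submodule.subset_span hx) (Submodule.smul_mem _ _ (Submodule.subset_span hy))

lemma mem_cspan' (x y : L) (hx : x ∈ t) (hy : y ∈ t) : x - Complex.I • y ∈ cspan L t := by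
  have : x - Complex.I • y = x + Complex.I • (-y) := by rw [smul_neg]; abel
  rw [this]; exact mem_cspan x (-y) hx (neg_mem hy)

lemma cspan_lie_zero (hab : ∀ x ∈ t, ∀ y ∈ t, ⁅x, y⁆ = (0 : L))
    {z w : L} (hz : z ∈ cspan L t) (hw : w ∈ cspan L t) : ⁅z, w⁆ = 0 := by
  obtain ⟨x, hx, y, hy, rfl⟩ := cspan_decomp hz
  obtain ⟨x', hx', y', hy', rfl⟩ := cspan_decomp hw
  rw [lie_expand, hab _ hx _ hx', hab _ hy _ hy', hab _ hx _ hy', hab _ hy _ hx']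
  simp

lemma root_re_zero (hg : IsCompactForm L g) (hle : t ≤ g) {a : Module.Dual ℂ L}
    (ha : IsRoot L t a) {H : L} (hH : H ∈ t) : (a H).re = 0 := by
  obtain ⟨-, X, hX0, hXr⟩ := ha
  have heq := hXr H (Submodule.subset_span hH)
  obtain ⟨u, hu, v, hv, rfl⟩ := hg.spans X
  have hL : ⁅H, u + Complex.I • v⁆ = ⁅H, u⁆ + Complex.I • ⁅H, v⁆ := by
    rw [lie_add, lie_smul]
  rw [hL, csmul_decomp] at heq
  have hHg : H ∈ g := hle hH
  obtain ⟨e1, e2⟩ := decomp_unique hg (g.lie_mem hHg hu) (g.lie_mem hHg hv)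
    (sub_mem (g.smul_mem _ hu) (g.smul_mem _ hv))
    (add_mem (g.smul_mem _ hu) (g.smul_mem _ hv)) heq
  set p := (a H).re with hp
  set q := (a H).im with hq
  let u' : ↥g := ⟨u, hu⟩
  let v' : ↥g := ⟨v, hv⟩
  let H' : ↥g := ⟨H, hHg⟩
  have e1' : ⁅H', u'⁆ = p • u' - q • v' := by
    apply Subtype.coe_injective
    simpa using e1
  have e2' : ⁅H', v'⁆ = q • u' + p • v' := by
    apply Subtype.coe_injective
    simpa using e2
  have hB1 : killingForm ℝ (↥g) ⁅H', u'⁆ u' = 0 := by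
    rw [LieModule.traceForm_apply_lie_apply]
    simp
  have hB2 : killingForm ℝ (↥g) ⁅H', v'⁆ v' = 0 := by
    rw [LieModule.traceForm_apply_lie_apply]
    simp
  rw [e1'] at hB1
  rw [e2'] at hB2
  simp only [map_sub, map_add, map_smul, LinearMap.sub_apply, LinearMap.add_apply,
    LinearMap.smul_apply, smul_eq_mul] at hB1 hB2
  have hcomm : killingForm ℝ (↥g) u' v' = killingForm ℝ (↥g) v' u' :=
    LieModule.traceForm_comm ℝ (↥g) (↥g) u' v'
  rw [hcomm] at hB2
  have key : p * (killingForm ℝ (↥g) u' u' + killingForm ℝ (↥g) v' v') = 0 := by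
    rw [mul_add]
    linarith [hB1, hB2]
  have hne : u' ≠ 0 ∨ v' ≠ 0 := by
    by_contra hc
    push_neg at hc
    apply hX0
    have hu0 : u = 0 := congrArg Subtype.val hc.1
    have hv0 : v = 0 := congrArg Subtype.val hc.2
    simp [hu0, hv0]
  have hBle : ∀ w : ↥g, killingForm ℝ (↥g) w w ≤ 0 := by
    intro w
    rcases eq_or_ne w 0 with h | h
    · simp [h]
    · exact (hg.negdef w h).le
  have hlt : killingForm ℝ (↥g) u' u' + killingForm ℝ (↥g) v' v' < 0 := by
    rcases hne with h | h
    · have h1 := hg.negdef u' h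
      have h2 := hBle v'
      linarith
    · have h1 := hg.negdef v' h
      have h2 := hBle u'
      linarith
  rcases mul_eq_zero.mp key with h | h
  · exact h
  · exact absurd h (ne_of_lt hlt)

lemma conj_rootSpace (hg : IsCompactForm L g) (hle : t ≤ g) {a : Module.Dual ℂ L}
    (ha : IsRoot L t a) {X : L} (hX : X ∈ rootSpace L t a) :
    conjFun hg X ∈ rootSpace L t (-a) := by
  intro H hH
  obtain ⟨H₁, h1, H₂, h2, rfl⟩ := cspan_decomp hH
  have hcm : H₁ - Complex.I • H₂ ∈ cspan L t := mem_cspan' _ _ h1 h2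
  have hconjH : conjFun hg (H₁ - Complex.I • H₂) = H₁ + Complex.I • H₂ := by
    have e : H₁ - Complex.I • H₂ = H₁ + Complex.I • (-H₂) := by rw [smul_neg]; abel
    rw [e, conjFun_spec hg (hle h1) (neg_mem (hle h2)), smul_neg]
    abel
  have step : ⁅H₁ + Complex.I • H₂, conjFun hg X⁆ = conjFun hg ⁅H₁ - Complex.I • H₂, X⁆ := by
    rw [conj_lie hg, hconjH]
  rw [step, hX _ hcm, conj_smul hg]
  congr 1
  have hv : a (H₁ - Complex.I • H₂) = a H₁ - Complex.I * a H₂ := by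
    rw [map_sub, map_smul]
    rfl
  have hv2 : (-a) (H₁ + Complex.I • H₂) = -(a H₁) - Complex.I * a H₂ := by
    simp only [LinearMap.neg_apply, map_add, map_smul, smul_eq_mul]
    ring
  rw [hv, hv2, map_sub, conj_of_re_zero (root_re_zero hg hle ha h1), map_mul,
    conj_of_re_zero (root_re_zero hg hle ha h2), Complex.conj_I]
  ring

lemma root_K_val {n : ℕ} {α : ℕ → Module.Dual ℂ L} {K : ℕ → L}
    {δ : Module.Dual ℂ L} {m : ℕ → ℕ}
    (hg : IsCompactForm L g) (hle : t ≤ g)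
    (hsys : IsSimpleSystem L t n α K) (hδ : IsHighestRoot L t n α δ m)
    {i : ℕ} (hi : i ∈ Finset.Icc 1 n) (hmi : m i = 1)
    {a : Module.Dual ℂ L} (ha : IsRoot L t a) :
    a (K i) = 0 ∨ a (K i) = 1 ∨ a (K i) = -1 := by
  have hKmem := hsys.K_mem i hi
  have sumeval : ∀ k : ℕ → ℕ, ∑ j ∈ Finset.Icc 1 n, (k j : ℂ) * α j (K i) = (k i : ℂ) := by
    intro k
    have h1 : ∀ j ∈ Finset.Icc 1 n, (k j : ℂ) * α j (K i)
        = if j = i then (k j : ℂ) else 0 := by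
      intro j hj
      rw [hsys.K_dual j hj i hi]
      split <;> simp
    rw [Finset.sum_congr rfl h1, Finset.sum_ite_eq' _ i (fun j => (k j : ℂ)), if_pos hi]
  rcases hsys.decomp a ha with ⟨k, hk⟩ | ⟨k, hk⟩
  · have hv : a (K i) = (k i : ℂ) := by rw [hk (K i) hKmem, sumeval]
    have hle1 : k i ≤ 1 := hmi ▸ hδ.highest a k ha hk i hi
    rcases Nat.le_one_iff_eq_zero_or_eq_one.mp hle1 with h | h <;> simp [hv, h]
  · have hv : a (K i) = -(k i : ℂ) := by rw [hk (K i) hKmem, sumeval]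
    have hroot : IsRoot L t (-a) := by
      obtain ⟨⟨H, hH, hne⟩, X, hX0, hXmem⟩ := ha
      exact ⟨⟨H, hH, by simpa using hne⟩, conjFun hg X, conj_ne_zero hg hX0,
        conj_rootSpace hg hle ⟨⟨H, hH, hne⟩, X, hX0, hXmem⟩ hXmem⟩
    have hk' : ∀ H ∈ cspan L t, (-a) H = ∑ j ∈ Finset.Icc 1 n, (k j : ℂ) * α j H := by
      intro H hH
      have h := hk H hH
      simp [LinearMap.neg_apply, h]
    have hle1 : k i ≤ 1 := hmi ▸ hδ.highest (-a) k hroot hk' i hi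
    rcases Nat.le_one_iff_eq_zero_or_eq_one.mp hle1 with h | h <;> simp [hv, h]

lemma lieEquiv_map_add (e : L ≃ₗ⁅ℂ⁆ L) (x y : L) : e (x + y) = e x + e y :=
  e.toLinearEquiv.map_add x y

lemma lieEquiv_map_smul (e : L ≃ₗ⁅ℂ⁆ L) (c : ℂ) (x : L) : e (c • x) = c • e x :=
  e.toLinearEquiv.map_smul c x

lemma lieEquiv_map_zero (e : L ≃ₗ⁅ℂ⁆ L) : e 0 = 0 :=
  e.toLinearEquiv.map_zero

lemma expAd_fix {expAd : L → (L ≃ₗ⁅ℂ⁆ L)} (hexp : IsExpAd L expAd)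
    {X Y : L} (h : ⁅X, Y⁆ = 0) : expAd X Y = Y := by
  have := hexp.eig X Y 0 (by simpa using h)
  simpa using this

lemma expAd_root {expAd : L → (L ≃ₗ⁅ℂ⁆ L)} (hexp : IsExpAd L expAd)
    (c : ℂ) {W X : L} {a : Module.Dual ℂ L} (hW : W ∈ cspan L t)
    (hX : X ∈ rootSpace L t a) :
    expAd (c • W) X = Complex.exp (c * a W) • X := by
  refine hexp.eig _ _ _ ?_
  rw [smul_lie, hX W hW, smul_smul]

end Aux

/-- Remark 2.2 (1), first part.  Let `g` be a compact simple Lie algebra,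
`t` a maximal abelian subalgebra, `δ = Σ m_j α_j` the highest root and `K i` the dual basis
of `t_ℂ`.  If `m i = 1` and `σ = Ad(exp (π/2) √-1 K i)`, then `g^σ = g^{τ_{K i}}` where
`τ_{K i} = Ad(exp π √-1 K i)`; consequently, since `τ_{K i}` is an involution,
`(g, g^σ)` is a symmetric pair. -/
theorem stmt_5
    (gC : Type) [LieRing gC] [LieAlgebra ℂ gC] [LieAlgebra ℝ gC]
    [IsScalarTower ℝ ℂ gC] [FiniteDimensional ℂ gC]
    [LieAlgebra.IsSimple ℂ gC]
    (g t : LieSubalgebra ℝ gC)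
    (hg : IsCompactForm gC g) (ht : IsMaxAbelian gC g t)
    (expAd : gC → (gC ≃ₗ⁅ℂ⁆ gC)) (hexp : IsExpAd gC expAd)
    (hspan : SpansByRoots gC t)
    (n : ℕ) (α : ℕ → Module.Dual ℂ gC) (K : ℕ → gC)
    (hsys : IsSimpleSystem gC t n α K)
    (δ : Module.Dual ℂ gC) (m : ℕ → ℕ) (hδ : IsHighestRoot gC t n α δ m)
    (i : ℕ) (hi : i ∈ Finset.Icc 1 n) (hmi : m i = 1) :
    FixIn gC g (sigmaAd gC expAd (K i)) = FixIn gC g (tau gC expAd (K i)) ∧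
    tau gC expAd (K i) * tau gC expAd (K i) = 1 ∧ tau gC expAd (K i) ≠ 1 ∧
    ∃ θ : gC ≃ₗ⁅ℂ⁆ gC, θ * θ = 1 ∧ θ ≠ 1 ∧ (∀ x ∈ g, θ x ∈ g) ∧
      FixIn gC g (sigmaAd gC expAd (K i)) = FixIn gC g θ := by
  classical
  have hab := ht.abelian
  have hle := ht.le
  set Ki := K i with hKi
  have hKmem : Ki ∈ cspan gC t := hsys.K_mem i hi
  have hval : ∀ a : Module.Dual ℂ gC, IsRoot gC t a → a Ki = 0 ∨ a Ki = 1 ∨ a Ki = -1 :=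
    fun a ha => root_K_val hg hle hsys hδ hi hmi ha
  set c2 : ℂ := ((Real.pi / 2 : ℝ) : ℂ) * Complex.I with hc2
  set c1 : ℂ := ((Real.pi : ℝ) : ℂ) * Complex.I with hc1
  have hσ : sigmaAd gC expAd Ki = expAd (c2 • Ki) := rfl
  have hτ : tau gC expAd Ki = expAd (c1 • Ki) := rfl
  have hspan' : ∀ z : gC, z ∈ Submodule.span ℂ ((cspan gC t : Set gC) ∪
      {X : gC | ∃ a : Module.Dual ℂ gC, IsRoot gC t a ∧ X ∈ rootSpace gC t a}) := by
    intro z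
    have h : Submodule.span ℂ ((cspan gC t : Set gC) ∪
        {X : gC | ∃ a : Module.Dual ℂ gC, IsRoot gC t a ∧ X ∈ rootSpace gC t a}) = ⊤ := hspan
    rw [h]
    exact Submodule.mem_top
  -- scalar exponential values
  have eτ1 : Complex.exp c1 = -1 := by
    rw [hc1]
    exact Complex.exp_pi_mul_I
  have eτn : Complex.exp (-c1) = -1 := by
    rw [Complex.exp_neg, eτ1]
    norm_num
  have eσ1 : Complex.exp c2 = Complex.I := by
    rw [hc2, Complex.exp_mul_I, ← Complex.ofReal_cos, ← Complex.ofReal_sin,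
      Real.cos_pi_div_two, Real.sin_pi_div_two]
    simp
  have eσn : Complex.exp (-c2) = -Complex.I := by
    rw [show -c2 = ((-(Real.pi / 2) : ℝ) : ℂ) * Complex.I by rw [hc2]; push_cast; ring,
      Complex.exp_mul_I, ← Complex.ofReal_cos, ← Complex.ofReal_sin, Real.cos_neg,
      Real.sin_neg, Real.cos_pi_div_two, Real.sin_pi_div_two]
    simp
  have e2pos : Complex.exp (2 * c1) = 1 := by
    rw [show 2 * c1 = 2 * ((Real.pi : ℝ) : ℂ) * Complex.I by rw [hc1]; ring]
    exact Complex.exp_two_pi_mul_I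
  have e2neg : Complex.exp (-(2 * c1)) = 1 := by
    rw [Complex.exp_neg, e2pos]
    norm_num
  -- the involution τ² = 1
  have hE2 : ∀ z : gC, expAd ((2 * c1) • Ki) z = z := by
    intro z
    induction hspan' z using Submodule.span_induction with
    | mem w hw =>
      rcases hw with hw | ⟨a, ha, hwa⟩
      · exact expAd_fix hexp (by rw [smul_lie, cspan_lie_zero hab hKmem hw, smul_zero])
      · rw [expAd_root hexp _ hKmem hwa]
        rcases hval a ha with h | h | h <;> rw [h]
        · simp
        · rw [mul_one, e2pos, one_smul]
        · rw [mul_neg_one, e2neg, one_smul]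
    | zero => exact lieEquiv_map_zero _
    | add x y _ _ ihx ihy => rw [lieEquiv_map_add, ihx, ihy]
    | smul c x _ ih => rw [lieEquiv_map_smul, ih]
  have hττ : tau gC expAd Ki * tau gC expAd Ki = 1 := by
    have hadd := hexp.add (c1 • Ki) (c1 • Ki) (by rw [lie_smul, smul_lie, lie_self]; simp)
    have hsum : c1 • Ki + c1 • Ki = (2 * c1) • Ki := by rw [two_mul, add_smul]
    rw [hτ, ← hadd, hsum]
    exact LieEquiv.ext fun x => hE2 x
  -- τ ≠ 1
  have hδK : δ Ki = 1 := by
    rw [hδ.decomp Ki hKmem]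
    have h1 : ∀ j ∈ Finset.Icc 1 n, (m j : ℂ) * α j Ki = if j = i then (m j : ℂ) else 0 := by
      intro j hj
      rw [hKi, hsys.K_dual j hj i hi]
      split <;> simp
    rw [Finset.sum_congr rfl h1, Finset.sum_ite_eq' _ i (fun j => (m j : ℂ)), if_pos hi, hmi]
    simp
  have hτne : tau gC expAd Ki ≠ 1 := by
    intro hone
    obtain ⟨-, X, hX0, hXmem⟩ := hδ.isRoot
    have hτX : tau gC expAd Ki X = -X := by
      rw [hτ, expAd_root hexp _ hKmem hXmem, hδK, mul_one, eτ1]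
      simp
    rw [hone] at hτX
    have hX' : X = -X := hτX
    have h2 : (2 : ℂ) • X = 0 := by
      rw [two_smul]
      nth_rewrite 1 [hX']
      simp
    exact hX0 (csmul_cancel two_ne_zero h2)
  -- τ = σ ∘ σ
  have hσσ : ∀ z : gC, tau gC expAd Ki z
      = sigmaAd gC expAd Ki (sigmaAd gC expAd Ki z) := by
    have hadd := hexp.add (c2 • Ki) (c2 • Ki) (by rw [lie_smul, smul_lie, lie_self]; simp)
    have hsum : c1 • Ki = c2 • Ki + c2 • Ki := by
      rw [← add_smul]
      congr 1
      rw [hc1, hc2]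
      push_cast
      ring
    intro z
    rw [hτ, hσ, hsum, hadd]
    rfl
  -- the cubic identity for σ
  have hcubic : ∀ z : gC, sigmaAd gC expAd Ki (sigmaAd gC expAd Ki (sigmaAd gC expAd Ki z))
      + sigmaAd gC expAd Ki z = sigmaAd gC expAd Ki (sigmaAd gC expAd Ki z) + z := by
    intro z
    induction hspan' z using Submodule.span_induction with
    | mem w hw =>
      rcases hw with hw | ⟨a, ha, hwa⟩
      · have hfix : sigmaAd gC expAd Ki w = w := by
          rw [hσ]
          exact expAd_fix hexp (by rw [smul_lie, cspan_lie_zero hab hKmem hw, smul_zero])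
        rw [hfix, hfix, hfix]
      · have hwX : sigmaAd gC expAd Ki w = Complex.exp (c2 * a Ki) • w := by
          rw [hσ]
          exact expAd_root hexp _ hKmem hwa
        set lam := Complex.exp (c2 * a Ki) with hlam
        have h1 : sigmaAd gC expAd Ki (sigmaAd gC expAd Ki w) = (lam * lam) • w := by
          rw [hwX, lieEquiv_map_smul, hwX, smul_smul]
        have h2 : sigmaAd gC expAd Ki (sigmaAd gC expAd Ki (sigmaAd gC expAd Ki w))
            = (lam * lam * lam) • w := by
          rw [h1, lieEquiv_map_smul, hwX, smul_smul]
        rw [h2, h1, hwX]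
        have hw1 : (lam * lam) • w + w = (lam * lam + 1) • w := by
          rw [add_smul, one_smul]
        have hw2 : (lam * lam * lam) • w + lam • w = (lam * lam * lam + lam) • w :=
          (add_smul _ _ _).symm
        rw [hw1, hw2]
        congr 1
        have hlamval : lam = 1 ∨ lam = Complex.I ∨ lam = -Complex.I := by
          rcases hval a ha with h | h | h
          · left; rw [hlam, h, mul_zero, Complex.exp_zero]
          · right; left; rw [hlam, h, mul_one, eσ1]
          · right; right; rw [hlam, h, mul_neg_one, eσn]
        rcases hlamval with h | h | h <;> rw [h]
        · ring
        · rw [Complex.I_mul_I]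
          ring
        · rw [show -Complex.I * -Complex.I = (-1 : ℂ) from by
            rw [neg_mul_neg, Complex.I_mul_I]]
          ring
    | zero => simp [lieEquiv_map_zero]
    | add x y _ _ ihx ihy =>
      simp only [lieEquiv_map_add]
      calc sigmaAd gC expAd Ki (sigmaAd gC expAd Ki (sigmaAd gC expAd Ki x))
            + sigmaAd gC expAd Ki (sigmaAd gC expAd Ki (sigmaAd gC expAd Ki y))
            + (sigmaAd gC expAd Ki x + sigmaAd gC expAd Ki y)
          = (sigmaAd gC expAd Ki (sigmaAd gC expAd Ki (sigmaAd gC expAd Ki x))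
              + sigmaAd gC expAd Ki x)
            + (sigmaAd gC expAd Ki (sigmaAd gC expAd Ki (sigmaAd gC expAd Ki y))
              + sigmaAd gC expAd Ki y) := by abel
        _ = (sigmaAd gC expAd Ki (sigmaAd gC expAd Ki x) + x)
            + (sigmaAd gC expAd Ki (sigmaAd gC expAd Ki y) + y) := by rw [ihx, ihy]
        _ = sigmaAd gC expAd Ki (sigmaAd gC expAd Ki x)
            + sigmaAd gC expAd Ki (sigmaAd gC expAd Ki y) + (x + y) := by abel
    | smul c x _ ih =>
      simp only [lieEquiv_map_smul, ← smul_add, ih]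
  -- fixed point sets agree
  have hfixeq : FixIn gC g (sigmaAd gC expAd Ki) = FixIn gC g (tau gC expAd Ki) := by
    ext x
    constructor
    · rintro ⟨hxg, hx⟩
      exact ⟨hxg, by rw [hσσ x, hx, hx]⟩
    · rintro ⟨hxg, hx⟩
      refine ⟨hxg, ?_⟩
      have h1 : sigmaAd gC expAd Ki (sigmaAd gC expAd Ki x) = x := by rw [← hσσ x]; exact hx
      have h2 := hcubic x
      rw [h1] at h2
      have h3 : (2 : ℂ) • (sigmaAd gC expAd Ki x - x) = 0 := by
        rw [smul_sub, two_smul, two_smul, h2]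
        abel
      exact sub_eq_zero.mp (csmul_cancel two_ne_zero h3)
  -- τ commutes with conjugation and hence preserves g
  have hDτ : ∀ z : gC, conjFun hg (tau gC expAd Ki (conjFun hg z)) = tau gC expAd Ki z := by
    intro z
    induction hspan' z using Submodule.span_induction with
    | mem w hw =>
      rcases hw with hw | ⟨a, ha, hwa⟩
      · obtain ⟨H₁, h1, H₂, h2, rfl⟩ := cspan_decomp hw
        have hcw : conjFun hg (H₁ + Complex.I • H₂) = H₁ - Complex.I • H₂ :=
          conjFun_spec hg (hle h1) (hle h2)
        have hmem' : H₁ - Complex.I • H₂ ∈ cspan gC t := mem_cspan' _ _ h1 h2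
        have hfix1 : tau gC expAd Ki (H₁ - Complex.I • H₂) = H₁ - Complex.I • H₂ := by
          rw [hτ]
          exact expAd_fix hexp (by rw [smul_lie, cspan_lie_zero hab hKmem hmem', smul_zero])
        have hfix2 : tau gC expAd Ki (H₁ + Complex.I • H₂) = H₁ + Complex.I • H₂ := by
          rw [hτ]
          exact expAd_fix hexp (by rw [smul_lie, cspan_lie_zero hab hKmem hw, smul_zero])
        rw [hcw, hfix1, hfix2]
        have e : H₁ - Complex.I • H₂ = H₁ + Complex.I • (-H₂) := by rw [smul_neg]; abel
        rw [e, conjFun_spec hg (hle h1) (neg_mem (hle h2)), smul_neg]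
        abel
      · have hcmem : conjFun hg w ∈ rootSpace gC t (-a) := conj_rootSpace hg hle ha hwa
        have hτc : tau gC expAd Ki (conjFun hg w)
            = Complex.exp (c1 * (-a) Ki) • conjFun hg w := by
          rw [hτ]
          exact expAd_root hexp _ hKmem hcmem
        rw [hτc, conj_smul hg, conj_conj hg, hτ, expAd_root hexp _ hKmem hwa]
        congr 1
        have hnegApp : (-a) Ki = -(a Ki) := rfl
        rcases hval a ha with h | h | h <;> rw [hnegApp, h]
        · simp
        · rw [show c1 * -(1 : ℂ) = -c1 by ring, mul_one, eτn, eτ1]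
          simp
        · rw [show c1 * -(-1 : ℂ) = c1 by ring, mul_neg_one, eτ1, eτn]
          simp
    | zero => simp [conj_zero hg, lieEquiv_map_zero]
    | add x y _ _ ihx ihy =>
      rw [conj_add hg, lieEquiv_map_add, conj_add hg, ihx, ihy, ← lieEquiv_map_add]
    | smul c x _ ih =>
      rw [conj_smul hg, lieEquiv_map_smul, conj_smul hg, Complex.conj_conj, ih,
        ← lieEquiv_map_smul]
  have hτg : ∀ x ∈ g, tau gC expAd Ki x ∈ g := by
    intro x hx
    apply conj_fixed hg
    have h := hDτ x
    rwa [conj_mem hg hx] at h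
  exact ⟨hfixeq, hττ, hτne, tau gC expAd Ki, hττ, hτne, hτg, hfixeq⟩


end Paper
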